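/- Let A be a commutative complex Banach algebra with identity 1 and let a ∈ A. If the multiplication operator M_a is recurrent, then a is invertible in A (hence M_a is invertible with inverse M_{a^{−1}}), and M_{a^{−1}} is also recurrent. -/

import Mathlib

open Filter Topology

/-- If the multiplication operator `M_a` on a commutative complex Banach
algebra with identity is recurrent (the set of its recurrent vectors is dense), then `a`
is invertible and the multiplication operator by the inverse is also recurrent. -/
theorem recurrent_multiplication_operator_invertible
    (A : Type*) [NormedCommRing A] [NormedAlgebra ℂ A] [CompleteSpace A]
    (a : A)
    (hrec : Dense {x : A | ∃ n : ℕ → ℕ, StrictMono n ∧ (∀ k, 0 < n k) ∧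
      Tendsto (fun k => a ^ n k * x) atTop (𝓝 x)}) :
    ∃ b : A, a * b = 1 ∧ b * a = 1 ∧
      Dense {x : A | ∃ n : ℕ → ℕ, StrictMono n ∧ (∀ k, 0 < n k) ∧
        Tendsto (fun k => b ^ n k * x) atTop (𝓝 x)} := by
  -- Step 1: `a` is a unit.
  have hu : IsUnit a := by
    by_contra ha
    obtain ⟨φ, hφ⟩ := WeakDual.CharacterSpace.exists_apply_eq_zero ha
    -- every recurrent vector lies in the kernel of φ
    have hker : {x : A | ∃ n : ℕ → ℕ, StrictMono n ∧ (∀ k, 0 < n k) ∧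
        Tendsto (fun k => a ^ n k * x) atTop (𝓝 x)} ⊆ {x : A | φ x = 0} := by
      rintro x ⟨n, hn, hpos, htend⟩
      have h1 : Tendsto (fun k => φ (a ^ n k * x)) atTop (𝓝 (φ x)) :=
        ((map_continuous φ).tendsto x).comp htend
      have h2 : (fun k => φ (a ^ n k * x)) = fun _ => (0 : ℂ) := by
        funext k
        rw [map_mul, map_pow, hφ, zero_pow (hpos k).ne', zero_mul]
      rw [h2] at h1
      exact (tendsto_nhds_unique tendsto_const_nhds h1).symm
    have hdense : Dense {x : A | φ x = 0} := hrec.mono hker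
    have hclosed : IsClosed {x : A | φ x = 0} :=
      isClosed_eq (map_continuous φ) continuous_const
    have : φ (1 : A) = 0 := by
      have := hclosed.closure_eq ▸ hdense.closure_eq
      exact (this ▸ Set.mem_univ (1 : A) : (1 : A) ∈ {x : A | φ x = 0})
    rw [map_one] at this
    exact one_ne_zero this
  set b : A := ↑hu.unit⁻¹ with hb
  have hab : a * b = 1 := hu.mul_val_inv
  have hba : b * a = 1 := hu.val_inv_mul
  refine ⟨b, hab, hba, ?_⟩
  -- the open sets for the Baire argument
  set G : ℕ → Set A := fun j =>
    {x : A | ∃ m : ℕ, j + 1 ≤ m ∧ ‖b ^ m * x - x‖ < 1 / (j + 1)} with hG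
  have hGopen : ∀ j, IsOpen (G j) := by
    intro j
    have : G j = ⋃ m : ℕ, ⋃ (_ : j + 1 ≤ m),
        {x : A | ‖b ^ m * x - x‖ < 1 / (j + 1)} := by
      ext x; simp [hG, Set.mem_iUnion]
    rw [this]
    refine isOpen_iUnion fun m => isOpen_iUnion fun _ => ?_
    exact isOpen_lt (Continuous.norm ((continuous_const.mul continuous_id).sub
      continuous_id)) continuous_const
  have hGdense : ∀ j, Dense (G j) := by
    intro j
    rw [Metric.dense_iff]
    intro z r hr
    obtain ⟨y, hyz, ⟨n, hn, hpos, htend⟩⟩ := Metric.dense_iff.mp hrec z (r / 2) (by linarith)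
    have hδ : (0 : ℝ) < min (r / 2) (1 / (j + 1)) := by
      apply lt_min (by linarith)
      positivity
    have hev : ∀ᶠ k in atTop, ‖a ^ n k * y - y‖ < min (r / 2) (1 / (j + 1)) := by
      have := (tendsto_iff_norm_sub_tendsto_zero.mp htend)
      exact this.eventually (eventually_lt_nhds hδ)
    obtain ⟨K, hK⟩ := eventually_atTop.mp hev
    set k := max K (j + 1) with hk
    have hKk := hK k (le_max_left _ _)
    have hnk : j + 1 ≤ n k := le_trans (le_max_right _ _) (hn.le_apply)
    refine ⟨a ^ n k * y, ?_, ⟨n k, hnk, ?_⟩⟩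
    · -- in the ball
      rw [Metric.mem_ball, dist_eq_norm]
      calc ‖a ^ n k * y - z‖ ≤ ‖a ^ n k * y - y‖ + ‖y - z‖ := norm_sub_le_norm_sub_add_norm_sub _ _ _
        _ < r / 2 + r / 2 := by
            refine add_lt_add_of_lt_of_le (lt_of_lt_of_le hKk (min_le_left _ _)) ?_
            rw [← dist_eq_norm]
            exact le_of_lt (Metric.mem_ball.mp hyz)
        _ = r := by ring
    · -- recurrence estimate
      have hby : b ^ n k * (a ^ n k * y) = y := by
        rw [← mul_assoc, ← mul_pow, hba, one_pow, one_mul]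
      rw [hby, norm_sub_rev]
      exact lt_of_lt_of_le hKk (min_le_right _ _)
  have hGinter : Dense (⋂ j, G j) := dense_iInter_of_isOpen hGopen hGdense
  refine hGinter.mono ?_
  intro x hx
  simp only [Set.mem_iInter] at hx
  -- recursively build a strictly monotone return-time sequence
  choose f hf1 hf2 using fun j => hx j
  set N : ℕ → ℕ := fun k => Nat.rec (f 0) (fun k p => f (max p (k + 1))) k with hN
  have hN0 : N 0 = f 0 := rfl
  have hNsucc : ∀ k, N (k + 1) = f (max (N k) (k + 1)) := fun k => rfl
  have hmono : StrictMono N := by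
    apply strictMono_nat_of_lt_succ
    intro k
    rw [hNsucc]
    calc N k < max (N k) (k + 1) + 1 := Nat.lt_succ_of_le (le_max_left _ _)
      _ ≤ f (max (N k) (k + 1)) := hf1 _
  have hposN : ∀ k, 0 < N k := by
    intro k
    cases k with
    | zero => exact lt_of_lt_of_le (Nat.succ_pos 0) (hf1 0)
    | succ k =>
      rw [hNsucc]
      exact lt_of_lt_of_le (Nat.succ_pos _) (hf1 _)
  have hbound : ∀ k, ‖b ^ N k * x - x‖ < 1 / (k + 1) := by
    intro k
    cases k with
    | zero => rw [hN0]; simpa using hf2 0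
    | succ k =>
      rw [hNsucc]
      refine lt_of_lt_of_le (hf2 (max (N k) (k + 1))) ?_
      apply one_div_le_one_div_of_le
      · positivity
      · exact_mod_cast Nat.succ_le_succ (le_max_right (N k) (k + 1))
  refine ⟨N, hmono, hposN, ?_⟩
  rw [tendsto_iff_norm_sub_tendsto_zero]
  refine squeeze_zero (fun k => norm_nonneg _) (fun k => le_of_lt (hbound k)) ?_
  exact tendsto_one_div_add_atTop_nhds_zero_nat
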